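/- Let V be a type of propositional variables and f ∉ V a fresh variable. Let H be a finite set of functions η : (V → Bool) → Bool → Bool, where the second argument represents the value substituted for a placeholder constant ⊥. Define the knowledge base Γ_⊥ := { σ ↦ η σ false : η ∈ H } over V, and the knowledge base Γ' := { σ' ↦ (η (σ' restricted to V) (σ' f)) ∨ σ' f : η ∈ H } over V ⊎ {f}. Let A ⊆ V, and let ψ be a formula over V that depends only on V \ A and is falsifiable (ψ τ = false for some assignment τ); extend ψ to V ⊎ {f} by ignoring f. Then (Γ_⊥, A, ψ) has an explanation if and only if (Γ', A ∪ {f}, ψ) has an explanation. -/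

import Mathlib

/-- `σ` satisfies the knowledge base `Γ` (a set of formulas, each a Boolean function
on assignments). -/
def SatKB {V : Type*} (Γ : Set ((V → Bool) → Bool)) (σ : V → Bool) : Prop :=
  ∀ γ ∈ Γ, γ σ = true

/-- `σ` satisfies the set of literals given by positive part `P` and negative part `N`. -/
def SatLits {V : Type*} (σ : V → Bool) (P N : Set V) : Prop :=
  (∀ x ∈ P, σ x = true) ∧ (∀ x ∈ N, σ x = false)

/-- `(P, N)` is an explanation for the abduction instance `(Γ, A, φ)`. -/
def IsExplanation {V : Type*} (Γ : Set ((V → Bool) → Bool)) (A : Set V)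
    (φ : (V → Bool) → Bool) (P N : Set V) : Prop :=
  P ⊆ A ∧ N ⊆ A ∧ Disjoint P N ∧
    (∃ σ, SatKB Γ σ ∧ SatLits σ P N) ∧
    (∀ σ, SatKB Γ σ → SatLits σ P N → φ σ = true)

/-- Replacing the constant `⊥` (second argument of each `η ∈ H`) by a fresh variable `f`
(modelled as `none : Option V`), disjoining `f` to every formula and adding `f` to the
hypotheses, preserves the existence of explanations, provided the manifestation `ψ`
depends only on `V \ A` and is falsifiable. -/
theorem stmt_1 (V : Type*) (H : Set ((V → Bool) → Bool → Bool)) (hH : H.Finite)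
    (A : Set V) (ψ : (V → Bool) → Bool)
    (hdep : ∀ σ τ : V → Bool, (∀ v ∉ A, σ v = τ v) → ψ σ = ψ τ)
    (hfals : ∃ τ : V → Bool, ψ τ = false) :
    let Γbot : Set ((V → Bool) → Bool) := (fun η : (V → Bool) → Bool → Bool =>
      fun σ : V → Bool => η σ false) '' H
    let Γ' : Set ((Option V → Bool) → Bool) :=
      (fun η : (V → Bool) → Bool → Bool =>
        fun σ' : Option V → Bool => η (fun v => σ' (some v)) (σ' none) || σ' none) '' H
    let ψ' : (Option V → Bool) → Bool := fun σ' => ψ (fun v => σ' (some v))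
    ((∃ P N : Set V, IsExplanation Γbot A ψ P N) ↔
        (∃ P' N' : Set (Option V),
          IsExplanation Γ' (some '' A ∪ {none}) ψ' P' N')) := by
  classical
  intro Γbot Γ' ψ'
  constructor
  · rintro ⟨P, N, hPA, hNA, hdisj, ⟨σ, hσΓ, hσP, hσN⟩, hent⟩
    refine ⟨some '' P, some '' N ∪ {none}, ?_, ?_, ?_, ?_, ?_⟩
    · exact (Set.image_mono hPA).trans Set.subset_union_left
    · exact Set.union_subset_union_left _ (Set.image_mono hNA)
    · rw [Set.disjoint_left]
      rintro a ⟨v, hv, rfl⟩ ha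
      rcases ha with ⟨w, hw, hww⟩ | h
      · cases Option.some_injective _ hww
        exact (Set.disjoint_left.mp hdisj hv) hw
      · simp at h
    · refine ⟨fun o => o.elim false σ, ?_, ?_, ?_⟩
      · rintro γ' ⟨η, hη, rfl⟩
        have : η σ false = true := hσΓ _ ⟨η, hη, rfl⟩
        simpa using this
      · rintro x ⟨v, hv, rfl⟩
        exact hσP v hv
      · rintro x (⟨v, hv, rfl⟩ | hx)
        · exact hσN v hv
        · simp at hx; subst hx; rfl
    · rintro σ' hσ'Γ ⟨hP', hN'⟩
      have hnone : σ' none = false := hN' none (Or.inr rfl)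
      have hkb : SatKB Γbot (fun v => σ' (some v)) := by
        rintro γ ⟨η, hη, rfl⟩
        have := hσ'Γ _ ⟨η, hη, rfl⟩
        simp only [hnone, Bool.or_false] at this
        exact this
      exact hent _ hkb ⟨fun v hv => hP' _ ⟨v, hv, rfl⟩,
        fun v hv => hN' _ (Or.inl ⟨v, hv, rfl⟩)⟩
  · rintro ⟨P', N', hP'A, hN'A, hdisj', ⟨σ', hσ'Γ, hσ'P, hσ'N⟩, hent'⟩
    by_cases hnone : none ∈ N'
    · refine ⟨{v | some v ∈ P'}, {v | some v ∈ N'}, ?_, ?_, ?_, ?_, ?_⟩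
      · intro v hv
        rcases hP'A hv with ⟨w, hw, hww⟩ | h
        · cases Option.some_injective _ hww; exact hw
        · simp at h
      · intro v hv
        rcases hN'A hv with ⟨w, hw, hww⟩ | h
        · cases Option.some_injective _ hww; exact hw
        · simp at h
      · rw [Set.disjoint_left]
        intro v hv hv'
        exact (Set.disjoint_left.mp hdisj' hv) hv'
      · have hf : σ' none = false := hσ'N none hnone
        refine ⟨fun v => σ' (some v), ?_, fun v hv => hσ'P _ hv, fun v hv => hσ'N _ hv⟩
        rintro γ ⟨η, hη, rfl⟩
        have := hσ'Γ _ ⟨η, hη, rfl⟩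
        simp only [hf, Bool.or_false] at this
        exact this
      · intro σ hkb ⟨hP, hN⟩
        set σ₀ : Option V → Bool := fun o => o.elim false σ with hσ₀
        have h1 : SatKB Γ' σ₀ := by
          rintro γ' ⟨η, hη, rfl⟩
          have : η σ false = true := hkb _ ⟨η, hη, rfl⟩
          simpa [hσ₀] using this
        have h2 : SatLits σ₀ P' N' := by
          constructor
          · intro x hx
            rcases hP'A hx with ⟨v, _, rfl⟩ | h
            · exact hP v hx
            · simp at h; subst h
              exact absurd hx (Set.disjoint_right.mp hdisj' hnone)
          · intro x hx
            rcases hN'A hx with ⟨v, _, rfl⟩ | h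
            · exact hN v hx
            · simp at h; subst h; rfl
        have := hent' σ₀ h1 h2
        simpa [ψ', hσ₀] using this
    · exfalso
      obtain ⟨τ, hτ⟩ := hfals
      set σ₀ : Option V → Bool := fun o =>
        o.elim true (fun v => if some v ∈ P' then true else if some v ∈ N' then false else τ v)
          with hσ₀
      have h1 : SatKB Γ' σ₀ := by
        rintro γ' ⟨η, hη, rfl⟩
        simp [hσ₀]
      have h2 : SatLits σ₀ P' N' := by
        constructor
        · rintro (_ | v) hx
          · rfl
          · simp only [hσ₀, Option.elim]; rw [if_pos hx]
        · rintro (_ | v) hx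
          · exact absurd hx hnone
          · have : some v ∉ P' := Set.disjoint_right.mp hdisj' hx
            simp only [hσ₀, Option.elim]; rw [if_neg this, if_pos hx]
      have h3 := hent' σ₀ h1 h2
      have h4 : ψ' σ₀ = ψ τ := by
        apply hdep
        intro v hv
        have hp : some v ∉ P' := fun h => by
          rcases hP'A h with ⟨w, hw, hww⟩ | hh
          · cases Option.some_injective _ hww; exact hv hw
          · simp at hh
        have hn : some v ∉ N' := fun h => by
          rcases hN'A h with ⟨w, hw, hww⟩ | hh
          · cases Option.some_injective _ hww; exact hv hw
          · simp at hh
        simp only [hσ₀, Option.elim]; rw [if_neg hp, if_neg hn]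
      rw [h3] at h4
      rw [hτ] at h4
      simp at h4
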